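/- Let η > 0 and r(γ) = log₂(1+γ) − η·log₂(e)·√(1 − 1/(1+γ)²). If γ₀ > 0 satisfies r(γ₀) = 0, then r is strictly increasing on [γ₀, ∞). -/

import Mathlib

open Real

-- auxiliary: strict mono of g γ = log(1+γ) - η √(1-1/(1+γ)^2)
theorem aux_strict (η : ℝ) (hη : 0 < η) (γ₀ : ℝ) (hγ₀ : 0 < γ₀)
    (hlog : Real.log (1 + γ₀) = η * Real.sqrt (1 - 1 / (1 + γ₀) ^ 2)) :
    StrictMonoOn (fun γ : ℝ =>
        Real.log (1 + γ) - η * Real.sqrt (1 - 1 / (1 + γ) ^ 2)) (Set.Ici γ₀) := by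
  set x₀ := 1 + γ₀ with hx₀def
  have hx₀ : 1 < x₀ := by simp [hx₀def]; linarith
  have hx₀0 : (0:ℝ) < x₀ := by linarith
  have hu₀ : (0:ℝ) < 1 - 1 / x₀ ^ 2 := by
    have : (1:ℝ) < x₀ ^ 2 := by nlinarith
    have : 1 / x₀ ^ 2 < 1 := by
      rw [div_lt_one (by positivity)]; exact this
    linarith
  set s₀ := Real.sqrt (1 - 1 / x₀ ^ 2) with hs₀def
  have hs₀pos : 0 < s₀ := Real.sqrt_pos.mpr hu₀
  have hs₀sq : s₀ ^ 2 = 1 - 1 / x₀ ^ 2 := Real.sq_sqrt hu₀.le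
  -- key at x₀ : η < x₀^2 * s₀
  have hkey₀ : η < x₀ ^ 2 * s₀ := by
    have hlog' : Real.log x₀ < x₀ ^ 2 - 1 := by
      have h1 : Real.log x₀ < x₀ - 1 := Real.log_lt_sub_one_of_pos hx₀0 (by linarith)
      nlinarith
    have : η * s₀ < (x₀ ^ 2 * s₀) * s₀ := by
      rw [← hlog]
      have : (x₀ ^ 2 * s₀) * s₀ = x₀ ^ 2 * (1 - 1 / x₀ ^ 2) := by
        rw [mul_assoc, ← sq, hs₀sq]
      rw [this]
      have : x₀ ^ 2 * (1 - 1 / x₀ ^ 2) = x₀ ^ 2 - 1 := by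
        field_simp
      rw [this]; exact hlog'
    exact lt_of_mul_lt_mul_right this hs₀pos.le
  apply strictMonoOn_of_deriv_pos (convex_Ici γ₀)
  · -- continuity
    apply ContinuousOn.sub
    · apply ContinuousOn.log (by fun_prop)
      intro γ hγ
      have : γ₀ ≤ γ := hγ
      intro h; nlinarith
    · apply ContinuousOn.mul continuousOn_const
      apply Real.continuous_sqrt.comp_continuousOn
      apply ContinuousOn.sub continuousOn_const
      apply ContinuousOn.div continuousOn_const (by fun_prop)
      intro γ hγ
      have : γ₀ ≤ γ := hγ
      intro h; nlinarith
  · intro γ hγ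
    rw [interior_Ici] at hγ
    have hγ' : γ₀ < γ := hγ
    set x := 1 + γ with hxdef
    have hx : x₀ < x := by simp [hxdef, hx₀def]; linarith
    have hx1 : (1:ℝ) < x := lt_trans hx₀ hx
    have hx0 : (0:ℝ) < x := by linarith
    have hxne : x ≠ 0 := hx0.ne'
    have hu : (0:ℝ) < 1 - 1 / x ^ 2 := by
      have h2 : (1:ℝ) < x ^ 2 := by nlinarith
      have : 1 / x ^ 2 < 1 := by rw [div_lt_one (by positivity)]; exact h2
      linarith
    set s := Real.sqrt (1 - 1 / x ^ 2) with hsdef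
    have hspos : 0 < s := Real.sqrt_pos.mpr hu
    -- derivative computation
    have hd1 : HasDerivAt (fun γ : ℝ => Real.log (1 + γ)) (1 / x) γ := by
      have h := (Real.hasDerivAt_log hxne).comp γ ((hasDerivAt_id γ).const_add 1)
      exact h.congr_deriv (by simp)
    have hdin : HasDerivAt (fun γ : ℝ => 1 - 1 / (1 + γ) ^ 2) (2 / x ^ 3) γ := by
      have hpow : HasDerivAt (fun γ : ℝ => (1 + γ) ^ 2) (2 * x) γ := by
        have h := ((hasDerivAt_id γ).const_add 1).pow 2
        exact h.congr_deriv (by simp [hxdef])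
      have hinv := hpow.inv (by positivity)
      have h := hinv.const_sub 1
      refine (h.congr_deriv ?_).congr_of_eventuallyEq (Filter.Eventually.of_forall fun t => ?_)
      · rw [← hxdef]; field_simp
      · simp [one_div]
    have hd2 : HasDerivAt (fun γ : ℝ => Real.sqrt (1 - 1 / (1 + γ) ^ 2))
        (1 / (2 * s) * (2 / x ^ 3)) γ := by
      exact (Real.hasDerivAt_sqrt hu.ne').comp γ hdin
    have hd : HasDerivAt (fun γ : ℝ =>
        Real.log (1 + γ) - η * Real.sqrt (1 - 1 / (1 + γ) ^ 2))
        (1 / x - η * (1 / (2 * s) * (2 / x ^ 3))) γ := hd1.sub (hd2.const_mul η)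
    rw [hd.deriv]
    -- positivity
    have hkey : η < x ^ 2 * s := by
      have hmono : x₀ ^ 2 * s₀ ≤ x ^ 2 * s := by
        apply mul_le_mul
        · nlinarith
        · apply Real.sqrt_le_sqrt
          have : 1 / x ^ 2 ≤ 1 / x₀ ^ 2 := by
            apply one_div_le_one_div_of_le (by positivity)
            nlinarith
          linarith
        · exact hs₀pos.le
        · positivity
      linarith
    have : η * (1 / (2 * s) * (2 / x ^ 3)) < 1 / x := by
      rw [show (1:ℝ) / (2 * s) * (2 / x ^ 3) = 1 / (s * x ^ 3) by
        field_simp]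
      rw [mul_one_div, div_lt_div_iff₀ (by positivity) hx0]
      calc η * x < (x ^ 2 * s) * x := by nlinarith
        _ = 1 * (s * x ^ 3) := by ring
    linarith

theorem stmt_3 (η : ℝ) (hη : 0 < η) (γ₀ : ℝ) (hγ₀ : 0 < γ₀)
    (hzero : Real.logb 2 (1 + γ₀) -
        η * Real.logb 2 (Real.exp 1) * Real.sqrt (1 - 1 / (1 + γ₀) ^ 2) = 0) :
    StrictMonoOn (fun γ : ℝ =>
        Real.logb 2 (1 + γ) -
          η * Real.logb 2 (Real.exp 1) * Real.sqrt (1 - 1 / (1 + γ) ^ 2))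
      (Set.Ici γ₀) := by
  have hl2 : (0:ℝ) < Real.log 2 := Real.log_pos one_lt_two
  have hlog : Real.log (1 + γ₀) = η * Real.sqrt (1 - 1 / (1 + γ₀) ^ 2) := by
    have h := hzero
    rw [Real.logb, Real.logb, Real.log_exp, sub_eq_zero] at h
    set s := Real.sqrt (1 - 1 / (1 + γ₀) ^ 2) with hs
    field_simp at h
    exact h
  have hg := aux_strict η hη γ₀ hγ₀ hlog
  have heq : ∀ γ : ℝ, Real.logb 2 (1 + γ) -
      η * Real.logb 2 (Real.exp 1) * Real.sqrt (1 - 1 / (1 + γ) ^ 2)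
      = (Real.log (1 + γ) - η * Real.sqrt (1 - 1 / (1 + γ) ^ 2)) * (Real.log 2)⁻¹ := by
    intro γ
    rw [Real.logb, Real.logb, Real.log_exp]
    field_simp
  intro a ha b hb hab
  simp only [heq]
  exact mul_lt_mul_of_pos_right (hg ha hb hab) (inv_pos.mpr hl2)
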